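/- arXiv:1012.2635 — 2 statements merged into one kernel-verified Lean document; each statement's English description precedes it below -/
import Mathlib

section
/- Let p be a prime number and let S be a nonempty finite multiset over a type α, with ℓ(S) its cardinality. If the p-adic valuation of the rational number θ(S) = (−1)^{ℓ(S)−1}·(ℓ(S)−1)! / ∏_a (mult_S(a))! is negative (i.e., θ(S) is not p-integral), then p divides the multiplicity mult_S(a) of every element a of S; equivalently, S = p • A (the multiset in which every multiplicity of A is multiplied by p) for a unique multiset A. -/
/-- `|Aut S| = ∏_a (mult_S a)!` for a finite multiset `S`. -/
noncomputable def lmovAut {α : Type*} [DecidableEq α] (S : Multiset α) : ℚ :=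
  ∏ a ∈ S.toFinset, (Nat.factorial (S.count a) : ℚ)

/-- `θ(S) = (−1)^{ℓ(S)−1} (ℓ(S)−1)! / |Aut S|`. -/
noncomputable def lmovTheta {α : Type*} [DecidableEq α] (S : Multiset α) : ℚ :=
  (-1) ^ (Multiset.card S - 1) * (Nat.factorial (Multiset.card S - 1) : ℚ) / lmovAut S

/-- If `θ(S)` is not `p`-integral then every multiplicity of `S` is divisible by `p`;
equivalently `S = p • A` for a unique multiset `A`. -/
theorem stmt_0 {α : Type*} [DecidableEq α] (p : ℕ) (hp : p.Prime)
    (S : Multiset α) (hS : S ≠ 0)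
    (h : padicValRat p (lmovTheta S) < 0) :
    (∀ a ∈ S, p ∣ S.count a) ∧ ∃! A : Multiset α, S = p • A := by
  haveI : Fact p.Prime := ⟨hp⟩
  set ℓ := Multiset.card S with hℓ
  have hℓpos : 0 < ℓ := by
    simpa [hℓ, Multiset.card_pos] using hS
  set M := Nat.multinomial S.toFinset S.count with hM
  have hMpos : 0 < M := Nat.multinomial_pos _ _
  have hsum : ∑ a ∈ S.toFinset, S.count a = ℓ := Multiset.toFinset_sum_count_eq S
  have hspec : (∏ a ∈ S.toFinset, (S.count a).factorial) * M = ℓ.factorial := by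
    rw [hM, Nat.multinomial_spec, hsum]
  have hAutpos : 0 < ∏ a ∈ S.toFinset, (S.count a).factorial :=
    Finset.prod_pos fun a _ => Nat.factorial_pos _
  -- θ = (-1)^(ℓ-1) * M / ℓ
  have hfact : ℓ * (ℓ - 1).factorial = ℓ.factorial := Nat.mul_factorial_pred hℓpos.ne'
  have hAutQ : lmovAut S = ((∏ a ∈ S.toFinset, (S.count a).factorial : ℕ) : ℚ) := by
    rw [lmovAut]; push_cast; rfl
  have hcQ : ((ℓ - 1).factorial : ℚ) * (ℓ : ℚ) =
      ((∏ a ∈ S.toFinset, (S.count a).factorial : ℕ) : ℚ) * (M : ℚ) := by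
    have : (ℓ - 1).factorial * ℓ = (∏ a ∈ S.toFinset, (S.count a).factorial) * M := by
      rw [mul_comm, hfact, ← hspec]
    exact_mod_cast this
  have hθ : lmovTheta S = (-1) ^ (ℓ - 1) * (M : ℚ) / (ℓ : ℚ) := by
    rw [lmovTheta, hAutQ, ← hℓ]
    rw [div_eq_div_iff (by exact_mod_cast hAutpos.ne') (by exact_mod_cast hℓpos.ne')]
    linear_combination ((-1 : ℚ)) ^ (ℓ - 1) * hcQ
  -- valuation of M/ℓ is negative
  have hval : (padicValNat p M : ℤ) < (padicValNat p ℓ : ℤ) := by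
    have hMne : (M : ℚ) ≠ 0 := by exact_mod_cast hMpos.ne'
    have hℓne : (ℓ : ℚ) ≠ 0 := by exact_mod_cast hℓpos.ne'
    have hdiv : padicValRat p ((M : ℚ) / (ℓ : ℚ)) =
        (padicValNat p M : ℤ) - (padicValNat p ℓ : ℤ) := by
      rw [padicValRat.div hMne hℓne, padicValRat.of_nat, padicValRat.of_nat]
    have hsign : padicValRat p (lmovTheta S) = padicValRat p ((M : ℚ) / (ℓ : ℚ)) := by
      rw [hθ]
      rcases Nat.even_or_odd (ℓ - 1) with he | ho
      · rw [he.neg_one_pow, one_mul]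
      · rw [ho.neg_one_pow, neg_one_mul, neg_div, padicValRat.neg]
    rw [hsign, hdiv] at h
    linarith
  have hdvd : ∀ a ∈ S, p ∣ S.count a := by
    intro a ha
    by_contra hnd
    have haf : a ∈ S.toFinset := Multiset.mem_toFinset.mpr ha
    set m := S.count a with hm
    have hmpos : 0 < m := Multiset.count_pos.mpr ha
    set f := Function.update S.count a (m - 1) with hf
    set M' := Nat.multinomial S.toFinset f with hM'
    have hM'pos : 0 < M' := Nat.multinomial_pos _ _
    -- sum of f
    have hsumf : ∑ b ∈ S.toFinset, f b = ℓ - 1 := by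
      rw [hf, Finset.sum_update_of_mem haf]
      have : m + ∑ b ∈ S.toFinset \ {a}, S.count b = ℓ := by
        rw [Finset.sdiff_singleton_eq_erase, hm,
          Finset.add_sum_erase _ (fun b => Multiset.count b S) haf, hsum]
      omega
    have hspec' : (∏ b ∈ S.toFinset, (f b).factorial) * M' = (ℓ - 1).factorial := by
      rw [hM', Nat.multinomial_spec, hsumf]
    -- the key identity m * M = ℓ * M'
    have hprodf : ∏ b ∈ S.toFinset, (f b).factorial =
        (m - 1).factorial * ∏ b ∈ S.toFinset.erase a, (S.count b).factorial := by
      rw [← Finset.mul_prod_erase _ _ haf, hf]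
      congr 1
      · rw [Function.update_self]
      · apply Finset.prod_congr rfl
        intro b hb
        rw [Function.update_of_ne (Finset.ne_of_mem_erase hb)]
    have hprod : ∏ b ∈ S.toFinset, (S.count b).factorial =
        m.factorial * ∏ b ∈ S.toFinset.erase a, (S.count b).factorial :=
      (Finset.mul_prod_erase _ _ haf).symm
    set Q := ∏ b ∈ S.toFinset.erase a, (S.count b).factorial with hQ
    have hQpos : 0 < Q := Finset.prod_pos fun b _ => Nat.factorial_pos _
    have hmfact : m * (m - 1).factorial = m.factorial := Nat.mul_factorial_pred hmpos.ne'
    have key : m * M = ℓ * M' := by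
      have h1 : (m * M) * ((m - 1).factorial * Q) = ℓ.factorial := by
        calc (m * M) * ((m - 1).factorial * Q)
            = (m * (m - 1).factorial * Q) * M := by ring
          _ = (m.factorial * Q) * M := by rw [hmfact]
          _ = ℓ.factorial := by rw [← hprod]; exact hspec
      have h2 : (ℓ * M') * ((m - 1).factorial * Q) = ℓ.factorial := by
        calc (ℓ * M') * ((m - 1).factorial * Q)
            = ℓ * (((m - 1).factorial * Q) * M') := by ring
          _ = ℓ * (ℓ - 1).factorial := by rw [← hprodf]; rw [hspec']
          _ = ℓ.factorial := hfact
      exact Nat.eq_of_mul_eq_mul_right (Nat.mul_pos (Nat.factorial_pos _) hQpos)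
        (h1.trans h2.symm)
    -- valuations
    have hvm : padicValNat p m = 0 := padicValNat.eq_zero_of_not_dvd hnd
    have hv1 : padicValNat p (m * M) = padicValNat p M := by
      rw [padicValNat.mul hmpos.ne' hMpos.ne', hvm, zero_add]
    have hv2 : padicValNat p (ℓ * M') = padicValNat p ℓ + padicValNat p M' :=
      padicValNat.mul hℓpos.ne' hM'pos.ne'
    have : padicValNat p M = padicValNat p ℓ + padicValNat p M' := by
      rw [← hv1, key, hv2]
    omega
  refine ⟨hdvd, ?_⟩
  obtain ⟨A, hA⟩ := S.exists_smul_of_dvd_count fun a ha => hdvd a ha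
  refine ⟨A, hA, ?_⟩
  intro B hB
  ext b
  have hc : p * Multiset.count b B = p * Multiset.count b A := by
    have := congrArg (Multiset.count b) (hB.symm.trans hA)
    simpa [Multiset.count_nsmul] using this
  exact Nat.eq_of_mul_eq_mul_left hp.pos hc
end

section
/- Let p be a prime number and let S be a nonempty finite multiset over a type α. Then the rational number θ(p • S) − θ(S)/p is p-integral, i.e., its p-adic valuation is nonnegative (or it is zero). Here p • S denotes the multiset in which the multiplicity of every element of S is multiplied by p. -/
open scoped Nat
open Polynomial Finset

/-- Kummer-type: `p^(v_p(n)+1) ∣ C(n,j) p^j` for `1 ≤ j ≤ n`. -/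
lemma lmov_aux_K (p n j : ℕ) (hp : p.Prime) (hj : 1 ≤ j) (hjn : j ≤ n) :
    p ^ (padicValNat p n + 1) ∣ n.choose j * p ^ j := by
  have hn0 : n ≠ 0 := by omega
  have hj0 : j ≠ 0 := by omega
  set v := padicValNat p n with hv
  set w := padicValNat p j with hw
  have h1 : p ^ v ∣ n := by
    rw [hv, ← Nat.factorization_def n hp]; exact Nat.ordProj_dvd n p
  have h2 : n ∣ n.choose j * j := by
    have h := Nat.add_one_mul_choose_eq (n - 1) (j - 1)
    have e1 : n - 1 + 1 = n := by omega
    have e2 : j - 1 + 1 = j := by omega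
    rw [e1, e2] at h
    exact ⟨(n - 1).choose (j - 1), h.symm⟩
  have h3 : p ^ v ∣ n.choose j * j := h1.trans h2
  have hwj : p ^ w ∣ j := by
    rw [hw, ← Nat.factorization_def j hp]; exact Nat.ordProj_dvd j p
  set u := j / p ^ w with hu
  have hju : j = p ^ w * u := (Nat.mul_div_cancel' hwj).symm
  have hpu : ¬ p ∣ u := by
    rw [hu, hw, ← Nat.factorization_def j hp]; exact Nat.not_dvd_ordCompl hp hj0
  have hcop : Nat.Coprime (p ^ v) u :=
    Nat.Coprime.pow_left v (hp.coprime_iff_not_dvd.mpr hpu)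
  have h4 : p ^ v ∣ n.choose j * p ^ w := by
    apply hcop.dvd_of_dvd_mul_right
    rw [mul_assoc, ← hju]; exact h3
  have hwle : w + 1 ≤ j := by
    have h5 : p ^ w ≤ j := Nat.le_of_dvd (by omega) hwj
    have h6 : w < 2 ^ w := Nat.lt_two_pow_self
    have h7 : 2 ^ w ≤ p ^ w := Nat.pow_le_pow_left hp.two_le w
    omega
  calc p ^ (v + 1) = p ^ v * p ^ 1 := by ring
    _ ∣ (n.choose j * p ^ w) * p ^ (j - w) :=
        mul_dvd_mul h4 (pow_dvd_pow p (by omega))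
    _ = n.choose j * p ^ j := by
        rw [mul_assoc, ← pow_add]; congr 2; omega

/-- Binomial congruence: `C(pn, pk) ≡ C(n,k) mod p^(v_p(n)+1)`. -/
lemma lmov_aux_binom (p : ℕ) (hp : p.Prime) (n k : ℕ) :
    (p : ℤ) ^ (padicValNat p n + 1) ∣ ((p * n).choose (p * k) : ℤ) - (n.choose k : ℤ) := by
  rcases Nat.eq_zero_or_pos n with hn | hn
  · subst hn
    rcases Nat.eq_zero_or_pos k with hk | hk
    · subst hk; simp
    · have h1 : (0 : ℕ).choose (p * k) = 0 :=
        Nat.choose_eq_zero_of_lt (Nat.mul_pos hp.pos hk)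
      have h2 : (0 : ℕ).choose k = 0 := Nat.choose_eq_zero_of_lt hk
      simp [h1, h2]
  haveI := Fact.mk hp
  obtain ⟨E, hE⟩ : (C (p : ℤ) ∣ (1 + X : ℤ[X]) ^ p - (1 + X ^ p)) := by
    rw [Polynomial.C_dvd_iff_dvd_coeff]
    intro i
    have hmap : Polynomial.map (Int.castRingHom (ZMod p))
        ((1 + X : ℤ[X]) ^ p - (1 + X ^ p)) = 0 := by
      rw [Polynomial.map_sub, Polynomial.map_pow, Polynomial.map_add,
        Polynomial.map_one, Polynomial.map_X, Polynomial.map_add,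
        Polynomial.map_one, Polynomial.map_pow, Polynomial.map_X,
        add_pow_char, one_pow, sub_self]
    have h := congrArg (fun q => Polynomial.coeff q i) hmap
    simp only [Polynomial.coeff_map, Polynomial.coeff_zero] at h
    exact (ZMod.intCast_zmod_eq_zero_iff_dvd _ p).mp h
  have hsplit : (1 + X : ℤ[X]) ^ p = (1 + X ^ p) + C (p : ℤ) * E := by
    rw [← hE]; ring
  have hpow : ((1 + X : ℤ[X])) ^ (p * n) =
      ∑ j ∈ range (n + 1), (1 + X ^ p) ^ j * (C (p : ℤ) * E) ^ (n - j)
        * ((n.choose j : ℕ) : ℤ[X]) := by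
    rw [pow_mul, hsplit, add_pow]
  have hcoeff := congrArg (fun q => Polynomial.coeff q (p * k)) hpow
  simp only [Polynomial.finset_sum_coeff] at hcoeff
  rw [Polynomial.coeff_one_add_X_pow, Finset.sum_range_succ] at hcoeff
  have hlast : ((1 + X ^ p : ℤ[X]) ^ n * (C (p : ℤ) * E) ^ (n - n)
      * ((n.choose n : ℕ) : ℤ[X])).coeff (p * k) = (n.choose k : ℤ) := by
    rw [Nat.sub_self, pow_zero, mul_one, Nat.choose_self, Nat.cast_one, mul_one]
    have hexp : ((1 : ℤ[X]) + X ^ p) ^ n = expand ℤ p ((1 + X) ^ n) := by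
      rw [map_pow, map_add, expand_X, map_one]
    rw [hexp, Polynomial.coeff_expand hp.pos]
    simp [Nat.mul_div_cancel_left k hp.pos, Polynomial.coeff_one_add_X_pow]
  rw [hlast] at hcoeff
  have : ((p * n).choose (p * k) : ℤ) - (n.choose k : ℤ) =
      ∑ j ∈ range n, ((1 + X ^ p : ℤ[X]) ^ j * (C (p : ℤ) * E) ^ (n - j)
        * ((n.choose j : ℕ) : ℤ[X])).coeff (p * k) := by
    rw [hcoeff]; ring
  rw [this]
  apply Finset.dvd_sum
  intro j hj
  have hjn : j < n := Finset.mem_range.mp hj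
  have hterm : (1 + X ^ p : ℤ[X]) ^ j * (C (p : ℤ) * E) ^ (n - j)
      * ((n.choose j : ℕ) : ℤ[X])
      = C ((p : ℤ) ^ (n - j)) * (((1 + X ^ p) ^ j * E ^ (n - j)) * C ((n.choose j : ℤ))) := by
    rw [mul_pow, ← C_pow,
      show ((n.choose j : ℕ) : ℤ[X]) = C ((n.choose j : ℕ) : ℤ) from (map_natCast C _).symm]
    ring
  rw [hterm, Polynomial.coeff_C_mul, Polynomial.coeff_mul_C]
  have hK : p ^ (padicValNat p n + 1) ∣ n.choose (n - j) * p ^ (n - j) :=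
    lmov_aux_K p n (n - j) hp (by omega) (by omega)
  rw [Nat.choose_symm (by omega : j ≤ n)] at hK
  have hKz := Int.natCast_dvd_natCast.mpr hK
  push_cast at hKz
  have hre : (p : ℤ) ^ (n - j) * (((1 + X ^ p : ℤ[X]) ^ j * E ^ (n - j)).coeff (p * k)
      * (n.choose j : ℤ))
      = ((n.choose j : ℤ) * (p : ℤ) ^ (n - j))
        * ((1 + X ^ p : ℤ[X]) ^ j * E ^ (n - j)).coeff (p * k) := by ring
  rw [hre]
  exact hKz.mul_right _

/-- Multinomial congruence. -/
lemma lmov_aux_multinomial {α : Type*} [DecidableEq α] (p : ℕ) (hp : p.Prime)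
    (T : Finset α) (f : α → ℕ) :
    (p : ℤ) ^ (padicValNat p (∑ i ∈ T, f i) + 1) ∣
      (Nat.multinomial T (fun i => p * f i) : ℤ) - (Nat.multinomial T f : ℤ) := by
  haveI := Fact.mk hp
  induction T using Finset.induction_on with
  | empty => simp
  | @insert a T hanotmem IH =>
    have ha : a ∉ T := hanotmem
    rw [Nat.multinomial_insert ha, Nat.multinomial_insert ha]
    set M := ∑ i ∈ T, f i with hM
    set n := f a + M with hn
    have hsum : (∑ i ∈ insert a T, f i) = n := by
      rw [Finset.sum_insert ha]
    have hsump : (∑ i ∈ T, p * f i) = p * M := by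
      rw [← Finset.mul_sum]
    have hX : p * f a + p * M = p * n := by rw [hn]; ring
    rw [hsum, hsump, hX]
    set X := (p * n).choose (p * f a) with hXdef
    set x := n.choose (f a) with hxdef
    set Y := Nat.multinomial T (fun i => p * f i) with hY
    set y := Nat.multinomial T f with hy
    have hbin : (p : ℤ) ^ (padicValNat p n + 1) ∣ (X : ℤ) - (x : ℤ) :=
      lmov_aux_binom p hp n (f a)
    have hsplit2 : ((X * Y : ℕ) : ℤ) - ((x * y : ℕ) : ℤ)
        = (X : ℤ) * ((Y : ℤ) - (y : ℤ)) + ((X : ℤ) - (x : ℤ)) * (y : ℤ) := by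
      push_cast; ring
    rw [hsplit2]
    apply dvd_add
    · -- first term
      rcases Nat.eq_zero_or_pos M with hM0 | hMpos
      · -- all f i = 0 on T, so Y = y = 1
        have hyone : y = 1 := by
          have hs : ∑ i ∈ T, f i = 0 := hM0
          have := Nat.multinomial_spec T f
          rw [hs] at this
          simp only [Nat.factorial_zero] at this
          have hprod : (∏ i ∈ T, (f i)!) = 1 := by
            apply Finset.prod_eq_one
            intro i hi
            rw [Finset.sum_eq_zero_iff.mp hs i hi, Nat.factorial_zero]
          rw [hprod, one_mul] at this
          exact this
        have hYone : Y = 1 := by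
          have hs : ∑ i ∈ T, p * f i = 0 := by rw [hsump, hM0, mul_zero]
          have := Nat.multinomial_spec T (fun i => p * f i)
          rw [hs] at this
          simp only [Nat.factorial_zero] at this
          have hprod : (∏ i ∈ T, (p * f i)!) = 1 := by
            apply Finset.prod_eq_one
            intro i hi
            rw [Finset.sum_eq_zero_iff.mp hs i hi, Nat.factorial_zero]
          rw [hprod, one_mul] at this
          exact this
        rw [hYone, hyone]
        simp
      · -- M ≥ 1
        have hnpos : 0 < n := by omega
        -- p^(v n + 1) ∣ X * p^(v M + 1)
        have hXM : X = (p * n).choose (p * M) := by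
          rw [hXdef, ← Nat.choose_symm (Nat.mul_le_mul_left p (by omega : f a ≤ n))]
          congr 1
          rw [hn, Nat.mul_add]
          omega
        have h2 : p * n ∣ (p * n).choose (p * M) * (p * M) := by
          have h := Nat.add_one_mul_choose_eq (p * n - 1) (p * M - 1)
          have e1 : p * n - 1 + 1 = p * n := by
            have := Nat.mul_pos hp.pos hnpos; omega
          have e2 : p * M - 1 + 1 = p * M := by
            have := Nat.mul_pos hp.pos hMpos; omega
          rw [e1, e2] at h
          exact ⟨(p * n - 1).choose (p * M - 1), h.symm⟩
        have hvp : p ^ (padicValNat p n + 1) ∣ p * n := by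
          have : p ^ padicValNat p n ∣ n := by
            rw [← Nat.factorization_def n hp]; exact Nat.ordProj_dvd n p
          calc p ^ (padicValNat p n + 1) = p * p ^ padicValNat p n := by ring
            _ ∣ p * n := mul_dvd_mul_left p this
        have h3 : p ^ (padicValNat p n + 1) ∣ X * (p * M) := by
          rw [hXM]; exact hvp.trans h2
        -- factor out the p-part of p*M
        have hpM0 : p * M ≠ 0 := (Nat.mul_pos hp.pos hMpos).ne'
        set w := padicValNat p (p * M) with hwdef
        have hwPM : p ^ w ∣ p * M := by
          rw [hwdef, ← Nat.factorization_def _ hp]; exact Nat.ordProj_dvd _ p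
        set u := (p * M) / p ^ w with hu
        have hju : p * M = p ^ w * u := (Nat.mul_div_cancel' hwPM).symm
        have hpu : ¬ p ∣ u := by
          rw [hu, hwdef, ← Nat.factorization_def _ hp]
          exact Nat.not_dvd_ordCompl hp hpM0
        have hcop : Nat.Coprime (p ^ (padicValNat p n + 1)) u :=
          Nat.Coprime.pow_left _ (hp.coprime_iff_not_dvd.mpr hpu)
        have h4 : p ^ (padicValNat p n + 1) ∣ X * p ^ w := by
          apply hcop.dvd_of_dvd_mul_right
          rw [mul_assoc, ← hju]; exact h3
        have hweq : w = padicValNat p M + 1 := by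
          rw [hwdef, padicValNat.mul hp.ne_zero (by omega), padicValNat.self hp.one_lt]
          omega
        -- conclude
        obtain ⟨e, he⟩ := IH
        have : (X : ℤ) * ((Y : ℤ) - (y : ℤ))
            = ((X * p ^ w : ℕ) : ℤ) * e := by
          rw [he, hweq]
          push_cast
          ring
        rw [this]
        exact Dvd.dvd.mul_right (by exact_mod_cast Int.natCast_dvd_natCast.mpr h4) e
    · exact hbin.mul_right _

lemma lmov_theta_eq {α : Type*} [DecidableEq α] (S : Multiset α) (hS : S ≠ 0) :
    lmovTheta S = (-1) ^ (Multiset.card S - 1)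
      * (Nat.multinomial S.toFinset S.count : ℚ) / (Multiset.card S : ℚ) := by
  have hcard : 0 < Multiset.card S := Multiset.card_pos.mpr hS
  have hsum : ∑ a ∈ S.toFinset, S.count a = Multiset.card S :=
    Multiset.toFinset_sum_count_eq S
  have hspec := Nat.multinomial_spec S.toFinset S.count
  rw [hsum] at hspec
  have hfact : Multiset.card S * (Multiset.card S - 1)! = (Multiset.card S)! :=
    Nat.mul_factorial_pred hcard.ne'
  have hAut : lmovAut S = ((∏ a ∈ S.toFinset, (S.count a)! : ℕ) : ℚ) := by
    rw [lmovAut, Nat.cast_prod]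
  have hAut0 : lmovAut S ≠ 0 := by
    rw [hAut]
    exact_mod_cast (Finset.prod_pos (fun i _ => Nat.factorial_pos _)).ne'
  rw [lmovTheta, hAut, div_eq_div_iff (by exact_mod_cast
    (Finset.prod_pos (fun i _ => Nat.factorial_pos _)).ne') (by exact_mod_cast hcard.ne')]
  have hnat : (Multiset.card S - 1)! * Multiset.card S
      = Nat.multinomial S.toFinset S.count * ∏ a ∈ S.toFinset, (S.count a)! := by
    rw [mul_comm (Nat.multinomial _ _), hspec, ← hfact]
    ring
  have hq : (((Multiset.card S - 1)! : ℕ) : ℚ) * (Multiset.card S : ℚ)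
      = (Nat.multinomial S.toFinset S.count : ℚ)
        * ((∏ a ∈ S.toFinset, (S.count a)! : ℕ) : ℚ) := by
    exact_mod_cast congrArg (fun m : ℕ => (m : ℚ)) hnat
  push_cast at hq ⊢
  linear_combination ((-1 : ℚ) ^ (Multiset.card S - 1)) * hq

/-- For a prime `p` and a nonempty finite multiset `S`, the rational number
`θ(p • S) − θ(S)/p` is `p`-integral: its `p`-adic valuation is nonnegative
(recall `padicValRat p 0 = 0`). -/
theorem stmt_1 {α : Type*} [DecidableEq α] (p : ℕ) (hp : p.Prime)
    (S : Multiset α) (hS : S ≠ 0) :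
    0 ≤ padicValRat p (lmovTheta (p • S) - lmovTheta S / p) := by
  haveI := Fact.mk hp
  have hcard : 0 < Multiset.card S := Multiset.card_pos.mpr hS
  set ℓ := Multiset.card S with hℓ
  have hplpos : 0 < p * ℓ := Nat.mul_pos hp.pos hcard
  have hpS : (p • S) ≠ 0 := by
    apply Multiset.card_pos.mp
    rw [Multiset.card_nsmul]
    exact hplpos
  have htf : (p • S).toFinset = S.toFinset := by
    ext a
    simp only [Multiset.mem_toFinset, ← Multiset.count_pos, Multiset.count_nsmul]
    constructor
    · intro h
      by_contra hc
      push_neg at hc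
      interval_cases h' : S.count a
      · omega
    · intro h
      exact Nat.mul_pos hp.pos h
  have hcount : (p • S).count = fun a => p * S.count a := by
    funext a
    exact Multiset.count_nsmul a p S
  set M₁ := Nat.multinomial S.toFinset S.count with hM1
  set M₂ := Nat.multinomial S.toFinset (fun a => p * S.count a) with hM2
  have h1 : lmovTheta S = (-1) ^ (ℓ - 1) * (M₁ : ℚ) / (ℓ : ℚ) :=
    lmov_theta_eq S hS
  have h2 : lmovTheta (p • S) = (-1) ^ (p * ℓ - 1) * (M₂ : ℚ) / ((p : ℚ) * ℓ) := by
    rw [lmov_theta_eq (p • S) hpS, htf, hcount, Multiset.card_nsmul]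
    push_cast
    ring
  have hdvd : (p : ℤ) ^ (padicValNat p ℓ + 1) ∣ (M₂ : ℤ) - (M₁ : ℤ) := by
    have h := lmov_aux_multinomial p hp S.toFinset S.count
    rwa [Multiset.toFinset_sum_count_eq] at h
  set z : ℤ := (-1) ^ (p * ℓ - 1) * (M₂ : ℤ) - (-1) ^ (ℓ - 1) * (M₁ : ℤ) with hz
  have hzdvd : (p : ℤ) ^ (padicValNat p ℓ + 1) ∣ z := by
    by_cases hpar : (p * ℓ - 1) % 2 = (ℓ - 1) % 2
    · have hsign : ((-1 : ℤ)) ^ (p * ℓ - 1) = (-1) ^ (ℓ - 1) := by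
        rcases Nat.even_or_odd (ℓ - 1) with h | h
        · rw [h.neg_one_pow, (Nat.even_iff.mpr (by rw [hpar]; exact Nat.even_iff.mp h)).neg_one_pow]
        · rw [h.neg_one_pow, (Nat.odd_iff.mpr (by rw [hpar]; exact Nat.odd_iff.mp h)).neg_one_pow]
      rw [hz, hsign, ← mul_sub]
      exact hdvd.mul_left _
    · -- p = 2 and ℓ odd
      have hmod : (p * ℓ) % 2 = ((p % 2) * (ℓ % 2)) % 2 := Nat.mul_mod p ℓ 2
      have hp2 : p = 2 := by
        by_contra hne
        have hodd : p % 2 = 1 := Nat.odd_iff.mp (hp.odd_of_ne_two hne)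
        rw [hodd, one_mul] at hmod
        omega
      subst hp2
      have hl2 : ℓ % 2 = 1 := by omega
      have hv0 : padicValNat 2 ℓ = 0 := by
        apply padicValNat.eq_zero_of_not_dvd
        omega
      have hdvd' : (2 : ℤ) ∣ (M₂ : ℤ) - (M₁ : ℤ) := by
        rw [hv0] at hdvd
        simpa using hdvd
      have hs1 : ((-1 : ℤ)) ^ (2 * ℓ - 1) = -1 :=
        (Nat.odd_iff.mpr (by omega)).neg_one_pow
      have hs2 : ((-1 : ℤ)) ^ (ℓ - 1) = 1 :=
        (Nat.even_iff.mpr (by omega)).neg_one_pow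
      have hzz : z = -((M₂ : ℤ) - (M₁ : ℤ)) - 2 * (M₁ : ℤ) := by
        rw [hz, hs1, hs2]; ring
      rw [hv0, pow_one, hzz]
      push_cast
      exact dvd_sub (dvd_neg.mpr (by exact_mod_cast hdvd')) (dvd_mul_right 2 _)
  have hexpr : lmovTheta (p • S) - lmovTheta S / p = (z : ℚ) / ((p : ℚ) * ℓ) := by
    have hp0 : (p : ℚ) ≠ 0 := Nat.cast_ne_zero.mpr hp.ne_zero
    have hl0 : (ℓ : ℚ) ≠ 0 := Nat.cast_ne_zero.mpr hcard.ne'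
    rw [h2, h1, hz]
    push_cast
    field_simp
  rw [hexpr]
  rcases eq_or_ne z 0 with hz0 | hz0
  · rw [hz0]
    simp
  · have hne1 : ((z : ℚ)) ≠ 0 := Int.cast_ne_zero.mpr hz0
    have hne2 : ((p : ℚ) * ℓ) ≠ 0 := by
      have : ((p * ℓ : ℕ) : ℚ) ≠ 0 := Nat.cast_ne_zero.mpr hplpos.ne'
      push_cast at this
      exact this
    have hd : ((p : ℚ) * ℓ) = ((p * ℓ : ℕ) : ℚ) := by push_cast; ring
    have hvpl : padicValNat p (p * ℓ) = 1 + padicValNat p ℓ := by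
      rw [padicValNat.mul hp.ne_zero hcard.ne', padicValNat.self hp.one_lt]
    have hval2 : padicValRat p ((p : ℚ) * ℓ) = 1 + (padicValNat p ℓ : ℤ) := by
      rw [hd, padicValRat.of_nat, hvpl]
      push_cast
      ring
    have hle : padicValNat p ℓ + 1 ≤ padicValInt p z := by
      rcases (padicValInt_dvd_iff _ _).mp hzdvd with h | h
      · exact absurd h hz0
      · exact h
    rw [padicValRat.div hne1 hne2, padicValRat.of_int, hval2]
    omega
end
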